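/- Let X be a finite nonempty set, let T_1, …, T_m : X → X be maps, and let (x_n)_{n≥0} be a sequence in X with x_{n+1} = T_{ν(n)}(x_n) for some schedule ν : ℕ → {1,…,m}. Assume: (1) there is a Lyapunov function U : X → ℝ such that U(T_i(x)) < U(x) for every x ∈ X and i ∈ {1,…,m} with T_i(x) ≠ x; and (2) there exists B ∈ ℕ such that for every i ∈ {1,…,m} and every n ∈ ℕ there is a k with n ≤ k ≤ n + B and ν(k) = i (every map is applied with bounded gaps). Then there exist n' ∈ ℕ and a point x̄ ∈ X that is a common fixed point of all the maps (T_i(x̄) = x̄ for all i ∈ {1,…,m}) such that x_n = x̄ for all n ≥ n'. -/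
import Mathlib


/-- Lemma on convergence of set-valued maps: On a finite nonempty set `X`, a
sequence evolving by applying maps `T 1, …, T m` according to a schedule `ν` with bounded gaps,
admitting a Lyapunov function `U` that strictly decreases on every non-fixed application,
reaches in finite time a common fixed point of all the maps and stays there forever. -/
theorem setValuedMap_convergence
    {X : Type*} [Fintype X] [Nonempty X] (m : ℕ)
    (T : Fin m → X → X) (ν : ℕ → Fin m) (x : ℕ → X)
    (hx : ∀ n : ℕ, x (n + 1) = T (ν n) (x n))
    (U : X → ℝ)
    (hU : ∀ (i : Fin m) (y : X), T i y ≠ y → U (T i y) < U y)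
    (B : ℕ)
    (hν : ∀ (i : Fin m) (n : ℕ), ∃ k : ℕ, n ≤ k ∧ k ≤ n + B ∧ ν k = i) :
    ∃ (n' : ℕ) (xbar : X), (∀ i : Fin m, T i xbar = xbar) ∧ ∀ n ≥ n', x n = xbar := by
  classical
  -- U (x n) is nonincreasing
  have hstep : ∀ n, U (x (n + 1)) ≤ U (x n) := by
    intro n
    rw [hx n]
    by_cases h : T (ν n) (x n) = x n
    · rw [h]
    · exact (hU _ _ h).le
  have hmono : ∀ a b, a ≤ b → U (x b) ≤ U (x a) := by
    intro a b hab
    induction b with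
    | zero => simp_all
    | succ b ih =>
      rcases Nat.lt_or_ge a (b + 1) with h | h
      · exact (hstep b).trans (ih (Nat.lt_succ_iff.mp h))
      · have : a = b + 1 := le_antisymm hab h
        simp [this]
  -- the set of values of U along the trajectory
  set t : Finset ℝ := (Finset.univ.image U).filter (fun r => ∃ n, U (x n) = r) with ht
  have ht0 : U (x 0) ∈ t := by
    simp [ht]
  have htne : t.Nonempty := ⟨_, ht0⟩
  obtain ⟨N, hN⟩ : ∃ n, U (x n) = t.min' htne := by
    have := t.min'_mem htne
    exact (Finset.mem_filter.mp this).2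
  have hmem : ∀ n, U (x n) ∈ t := by
    intro n; simp [ht]
  have hconst : ∀ n, N ≤ n → U (x n) = t.min' htne := by
    intro n hn
    refine le_antisymm ?_ (t.min'_le _ (hmem n))
    rw [← hN]; exact hmono N n hn
  have hxconst : ∀ n, N ≤ n → x n = x N := by
    intro n hn
    induction n with
    | zero => simp [Nat.le_zero.mp hn]
    | succ n ih =>
      rcases Nat.lt_or_ge N (n + 1) with h | h
      · have hNn : N ≤ n := Nat.lt_succ_iff.mp h
        have hfix : T (ν n) (x n) = x n := by
          by_contra hne
          have h1 := hU (ν n) (x n) hne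
          rw [← hx n, hconst n hNn, hconst (n+1) (by omega)] at h1
          exact lt_irrefl _ h1
        rw [hx n, hfix, ih hNn]
      · have : N = n + 1 := le_antisymm hn h
        simp [this]
  refine ⟨N, x N, ?_, fun n hn => hxconst n hn⟩
  intro i
  obtain ⟨k, hk1, hk2, hk3⟩ := hν i N
  have h1 : x k = x N := hxconst k hk1
  have h2 : x (k + 1) = x N := hxconst (k + 1) (by omega)
  have := hx k
  rw [hk3, h1, h2] at this
  exact this.symm
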